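/- Let x₁, x₂, x₃ ∈ ℝ³ (Euclidean space) be the vertices of a triangle T, let x(s,t) = (1−s−t)·x₁ + s·x₂ + t·x₃ be the affine parameterization over the reference triangle e₀ = {(s,t) ∈ ℝ² : 0 ≤ s, 0 ≤ t, s + t ≤ 1}, let x_c = (x₁ + x₂ + x₃)/3 be the centroid, and let |Δ| = ‖(x₂ − x₁) × (x₃ − x₁)‖ (twice the area of T). Let f : ℝ³ → ℝ be twice continuously differentiable on an open set containing T, let K ≥ 0 satisfy |f''(y)(v,v)| ≤ K‖v‖² for all y ∈ T and v ∈ ℝ³, and let h be the diameter of T (the maximum distance between two of its points). Then | |Δ|·∫_{e₀} f(x(s,t)) d(s,t) − (|Δ|/2)·f(x_c) | ≤ (|Δ|/4)·K·h². -/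

import Mathlib

open scoped RealInnerProductSpace

/-- The reference triangle `e₀ = {(s,t) : 0 ≤ s, 0 ≤ t, s + t ≤ 1}` in the plane. -/
def refTriangle : Set (ℝ × ℝ) := {p | 0 ≤ p.1 ∧ 0 ≤ p.2 ∧ p.1 + p.2 ≤ 1}

/-- Cross product of vectors in Euclidean three-space. -/
noncomputable def cross3 (a b : EuclideanSpace ℝ (Fin 3)) : EuclideanSpace ℝ (Fin 3) :=
  (EuclideanSpace.equiv (Fin 3) ℝ).symm
    (crossProduct ((EuclideanSpace.equiv (Fin 3) ℝ) a) ((EuclideanSpace.equiv (Fin 3) ℝ) b))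


open MeasureTheory Set


lemma measurableSet_refTriangle : MeasurableSet refTriangle := by
  apply MeasurableSet.inter (measurableSet_le measurable_const measurable_fst)
  exact MeasurableSet.inter (measurableSet_le measurable_const measurable_snd)
    (measurableSet_le (measurable_fst.add measurable_snd) measurable_const)

lemma isCompact_refTriangle : IsCompact refTriangle := by
  have hsub : refTriangle ⊆ Icc (0,0) (1,1) := by
    rintro ⟨s,t⟩ ⟨h1,h2,h3⟩
    simp only [Prod.mk_le_mk, mem_Icc]
    exact ⟨⟨h1, h2⟩, ⟨by linarith, by linarith⟩⟩
  have hcl : IsClosed refTriangle := by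
    apply IsClosed.inter (isClosed_le continuous_const continuous_fst)
    exact IsClosed.inter (isClosed_le continuous_const continuous_snd)
      (isClosed_le (continuous_fst.add continuous_snd) continuous_const)
  exact isCompact_Icc.of_isClosed_subset hcl hsub

lemma refTriangle_integral (F : ℝ × ℝ → ℝ) (hF : Continuous F) :
    ∫ p in refTriangle, F p
      = ∫ s in Icc (0:ℝ) 1, ∫ t in Icc (0:ℝ) (1 - s), F (s, t) := by
  have hmeas := measurableSet_refTriangle
  have hint : Integrable (refTriangle.indicator F)
      ((volume : Measure ℝ).prod (volume : Measure ℝ)) :=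
    MeasureTheory.Measure.volume_eq_prod ℝ ℝ ▸
      ((hF.continuousOn.integrableOn_compact isCompact_refTriangle).integrable_indicator hmeas)
  have hslice : ∀ s ∈ Icc (0:ℝ) 1, (fun t => refTriangle.indicator F (s, t))
      = (Icc (0:ℝ) (1-s)).indicator (fun t => F (s,t)) := by
    intro s hs; funext t
    obtain ⟨h0, h1⟩ := mem_Icc.mp hs
    simp only [indicator_apply, refTriangle, mem_setOf_eq, mem_Icc]
    by_cases ht : 0 ≤ t ∧ t ≤ 1 - s
    · rw [if_pos ⟨h0, ht.1, by linarith [ht.2]⟩, if_pos ht]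
    · rw [if_neg, if_neg ht]
      rintro ⟨-, hc1, hc2⟩; exact ht ⟨hc1, by linarith⟩
  have hslice0 : ∀ s, s ∉ Icc (0:ℝ) 1 → (fun t => refTriangle.indicator F (s, t))
      = fun _ => (0:ℝ) := by
    intro s hs; funext t
    apply indicator_of_notMem
    rintro ⟨h0, h1, h2⟩
    exact hs (mem_Icc.mpr ⟨h0, by linarith⟩)
  calc ∫ p in refTriangle, F p = ∫ p, refTriangle.indicator F p := (integral_indicator hmeas).symm
    _ = ∫ s, ∫ t, refTriangle.indicator F (s, t) := by
        rw [MeasureTheory.Measure.volume_eq_prod ℝ ℝ, integral_prod _ hint]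
    _ = ∫ s, (Icc (0:ℝ) 1).indicator (fun s => ∫ t in Icc (0:ℝ) (1-s), F (s,t)) s := by
        refine integral_congr_ae (Filter.Eventually.of_forall fun s => ?_)
        show (∫ t, refTriangle.indicator F (s, t)) = _
        by_cases hs : s ∈ Icc (0:ℝ) 1
        · rw [indicator_of_mem hs, hslice s hs, integral_indicator measurableSet_Icc]
        · rw [indicator_of_notMem hs, hslice0 s hs, integral_zero]
    _ = _ := integral_indicator measurableSet_Icc


lemma refTriangle_vol : ∫ p in refTriangle, (1:ℝ) = 1/2 := by
  rw [refTriangle_integral _ continuous_const]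
  have h : EqOn (fun s : ℝ => ∫ t in Icc (0:ℝ) (1-s), (1:ℝ)) (fun s => 1 - s) (Icc 0 1) := by
    intro s hs
    have h1 : (0:ℝ) ≤ 1 - s := by linarith [(mem_Icc.mp hs).2]
    simp [Real.volume_Icc, ENNReal.toReal_ofReal h1, (mem_Icc.mp hs).2]
  rw [setIntegral_congr_fun measurableSet_Icc h, integral_Icc_eq_integral_Ioc,
    ← intervalIntegral.integral_of_le zero_le_one,
    intervalIntegral.integral_sub intervalIntegrable_const intervalIntegral.intervalIntegrable_id,
    integral_id]
  simp; norm_num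

lemma refTriangle_m1 : ∫ p in refTriangle, p.1 = 1/6 := by
  rw [refTriangle_integral _ continuous_fst]
  have h : EqOn (fun s : ℝ => ∫ t in Icc (0:ℝ) (1-s), ((s,t) : ℝ × ℝ).1)
      (fun s => s - s^2) (Icc 0 1) := by
    intro s hs
    have h1 : (0:ℝ) ≤ 1 - s := by linarith [(mem_Icc.mp hs).2]
    simp [Real.volume_Icc, ENNReal.toReal_ofReal h1]
    rw [max_eq_left h1]; ring
  rw [setIntegral_congr_fun measurableSet_Icc h, integral_Icc_eq_integral_Ioc,
    ← intervalIntegral.integral_of_le zero_le_one,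
    intervalIntegral.integral_sub intervalIntegral.intervalIntegrable_id
      ((continuous_pow 2).intervalIntegrable 0 1),
    integral_id, integral_pow]
  norm_num

lemma refTriangle_m2 : ∫ p in refTriangle, p.2 = 1/6 := by
  rw [refTriangle_integral _ continuous_snd]
  have h : EqOn (fun s : ℝ => ∫ t in Icc (0:ℝ) (1-s), ((s,t) : ℝ × ℝ).2)
      (fun s => (1-s)^2/2) (Icc 0 1) := by
    intro s hs
    have h1 : (0:ℝ) ≤ 1 - s := by linarith [(mem_Icc.mp hs).2]
    show (∫ t in Icc (0:ℝ) (1-s), t) = (1-s)^2/2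
    rw [integral_Icc_eq_integral_Ioc, ← intervalIntegral.integral_of_le h1,
      integral_id]
    ring
  rw [setIntegral_congr_fun measurableSet_Icc h, integral_Icc_eq_integral_Ioc,
    ← intervalIntegral.integral_of_le zero_le_one]
  have : ∫ s in (0:ℝ)..1, (1-s)^2/2 = ∫ x in (0:ℝ)..1, x^2/2 := by
    have := intervalIntegral.integral_comp_sub_left (a := (0:ℝ)) (b := 1) (fun x : ℝ => x^2/2) 1
    simpa using this
  rw [this, intervalIntegral.integral_div, integral_pow]
  norm_num


lemma taylor_aux {E : Type*} [NormedAddCommGroup E] [NormedSpace ℝ E]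
    (f : E → ℝ) (U : Set E) (hU : IsOpen U) (hf : ContDiffOn ℝ 2 f U)
    (a b : E) (hab : segment ℝ a b ⊆ U) (C : ℝ)
    (hC : ∀ y ∈ segment ℝ a b, |iteratedFDeriv ℝ 2 f y ![b - a, b - a]| ≤ C) :
    |f b - f a - fderiv ℝ f a (b - a)| ≤ C / 2 := by
  set w := b - a with hw
  set γ : ℝ → E := fun τ => a + τ • w with hγdef
  have hγcont : Continuous γ := by fun_prop
  have hseg : ∀ τ ∈ Icc (0:ℝ) 1, γ τ ∈ segment ℝ a b := by
    intro τ hτ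
    rw [segment_eq_image']
    exact mem_image_of_mem _ hτ
  set O : Set ℝ := γ ⁻¹' U with hOdef
  have hO : IsOpen O := hU.preimage hγcont
  have hIccO : Icc (0:ℝ) 1 ⊆ O := fun τ hτ => hab (hseg τ hτ)
  set φ : ℝ → ℝ := fun τ => f (γ τ) with hφdef
  set φ' : ℝ → ℝ := fun τ => fderiv ℝ f (γ τ) w with hφ'def
  set ψ : ℝ → ℝ := fun τ => fderiv ℝ (fderiv ℝ f) (γ τ) w w with hψdef
  have hγ' : ∀ τ : ℝ, HasDerivAt γ w τ := by
    intro τ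
    simpa [hγdef] using ((hasDerivAt_id τ).smul_const w).const_add a
  have hmemU : ∀ τ ∈ O, γ τ ∈ U := fun τ hτ => hτ
  have hφ' : ∀ τ ∈ O, HasDerivAt φ (φ' τ) τ := by
    intro τ hτ
    have hdf : DifferentiableAt ℝ f (γ τ) :=
      ((hf.contDiffAt (hU.mem_nhds (hmemU τ hτ))).differentiableAt (by norm_num))
    exact hdf.hasFDerivAt.comp_hasDerivAt τ (hγ' τ)
  have hψ : ∀ τ ∈ O, HasDerivAt φ' (ψ τ) τ := by
    intro τ hτ
    have hdf2 : DifferentiableAt ℝ (fderiv ℝ f) (γ τ) := by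
      have := (hf.contDiffAt (hU.mem_nhds (hmemU τ hτ))).fderiv_right
        (m := 1) (by norm_num)
      exact this.differentiableAt (by norm_num)
    have he : HasFDerivAt (fun y => fderiv ℝ f y w)
        ((ContinuousLinearMap.apply ℝ ℝ w).comp (fderiv ℝ (fderiv ℝ f) (γ τ))) (γ τ) :=
      (ContinuousLinearMap.apply ℝ ℝ w).hasFDerivAt.comp (γ τ) hdf2.hasFDerivAt
    have := he.comp_hasDerivAt τ (hγ' τ)
    exact this
  have hUD : UniqueDiffOn ℝ (Icc (0:ℝ) 1) := uniqueDiffOn_Icc zero_lt_one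
  have hderivwithin : ∀ τ ∈ Icc (0:ℝ) 1, derivWithin φ (Icc (0:ℝ) 1) τ = φ' τ := by
    intro τ hτ
    exact ((hφ' τ (hIccO hτ)).hasDerivWithinAt).derivWithin (hUD τ hτ)
  have hcd1 : ContDiffOn ℝ 1 φ (Icc (0:ℝ) 1) := by
    have hγcd : ContDiffOn ℝ 1 γ (Icc (0:ℝ) 1) :=
      (contDiff_const.add (contDiff_id.smul contDiff_const)).contDiffOn
    exact (hf.of_le (by norm_num)).comp hγcd hIccO
  have hdiff : DifferentiableOn ℝ (iteratedDerivWithin 1 φ (Icc (0:ℝ) 1)) (Ioo (0:ℝ) 1) := by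
    have heq : ∀ τ ∈ Ioo (0:ℝ) 1, iteratedDerivWithin 1 φ (Icc (0:ℝ) 1) τ = φ' τ := by
      intro τ hτ
      rw [iteratedDerivWithin_one]
      exact hderivwithin τ (Ioo_subset_Icc_self hτ)
    refine DifferentiableOn.congr (f := φ') ?_ heq
    intro τ hτ
    exact (hψ τ (hIccO (Ioo_subset_Icc_self hτ))).differentiableAt.differentiableWithinAt
  obtain ⟨x', hx', hrem⟩ := taylor_mean_remainder_lagrange (n := 1) (x₀ := 0) (x := 1) zero_ne_one
    (by rw [uIcc_of_le zero_le_one]; exact_mod_cast hcd1)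
    (by rw [uIcc_of_le zero_le_one, uIoo_of_le zero_le_one]; exact hdiff)
  rw [uIcc_of_le zero_le_one] at hrem
  rw [uIoo_of_le zero_le_one] at hx'
  have htay : taylorWithinEval φ 1 (Icc (0:ℝ) 1) 0 1 = φ 0 + φ' 0 := by
    rw [taylorWithinEval_succ, taylor_within_zero_eval,
      iteratedDerivWithin_one, hderivwithin 0 (by norm_num)]
    norm_num
  have hsecond : iteratedDerivWithin 2 φ (Icc (0:ℝ) 1) x' = ψ x' := by
    have h2 : iteratedDerivWithin 2 φ (Icc (0:ℝ) 1) x'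
        = derivWithin (derivWithin φ (Icc (0:ℝ) 1)) (Icc (0:ℝ) 1) x' := by
      rw [iteratedDerivWithin_succ]
      exact derivWithin_congr
        (fun τ hτ => by rw [iteratedDerivWithin_one])
        (by rw [iteratedDerivWithin_one])
    rw [h2, derivWithin_congr hderivwithin (hderivwithin x' (Ioo_subset_Icc_self hx'))]
    exact ((hψ x' (hIccO (Ioo_subset_Icc_self hx'))).hasDerivWithinAt).derivWithin
      (hUD x' (Ioo_subset_Icc_self hx'))
  have hψbound : |ψ x'| ≤ C := by
    have := hC (γ x') (hseg x' (Ioo_subset_Icc_self hx'))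
    have heq : iteratedFDeriv ℝ 2 f (γ x') ![b - a, b - a] = ψ x' := by
      rw [iteratedFDeriv_two_apply]
      simp [hψdef, hw]
    rwa [heq] at this
  have hφ1 : φ 1 = f b := by simp [hφdef, hγdef, hw]
  have hφ0 : φ 0 = f a := by simp [hφdef, hγdef]
  have hφ'0 : φ' 0 = fderiv ℝ f a w := by simp [hφ'def, hγdef]
  rw [htay, hsecond] at hrem
  norm_num [Nat.factorial] at hrem
  have heq2 : f b - f a - fderiv ℝ f a w = ψ x' / 2 := by
    rw [← hφ1, ← hφ0, ← hφ'0]; linarith [hrem]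
  rw [heq2, abs_div, abs_two]
  linarith [hψbound]

/-- Single-triangle centroid quadrature estimate (Lemma 6, 3D case, single element):
for `f` twice continuously differentiable on an open set containing the triangle `T` with
vertices `x₁, x₂, x₃`, with second derivative bounded as a quadratic form by `K`, the
centroid rule has error at most `(|Δ|/4) K h²`, where `|Δ| = ‖(x₂−x₁) × (x₃−x₁)‖` and
`h = diam T`. -/
theorem centroid_rule_triangle_estimate
    (x₁ x₂ x₃ : EuclideanSpace ℝ (Fin 3))
    (T : Set (EuclideanSpace ℝ (Fin 3))) (hT : T = convexHull ℝ {x₁, x₂, x₃})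
    (f : EuclideanSpace ℝ (Fin 3) → ℝ)
    (U : Set (EuclideanSpace ℝ (Fin 3))) (hU : IsOpen U) (hTU : T ⊆ U)
    (hf : ContDiffOn ℝ 2 f U)
    (K : ℝ) (hK : 0 ≤ K)
    (hK2 : ∀ y ∈ T, ∀ v : EuclideanSpace ℝ (Fin 3),
      |iteratedFDeriv ℝ 2 f y ![v, v]| ≤ K * ‖v‖ ^ 2) :
    |‖cross3 (x₂ - x₁) (x₃ - x₁)‖ *
        (∫ p in refTriangle, f ((1 - p.1 - p.2) • x₁ + p.1 • x₂ + p.2 • x₃)) -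
      (‖cross3 (x₂ - x₁) (x₃ - x₁)‖ / 2) * f (((1:ℝ)/3) • (x₁ + x₂ + x₃))|
      ≤ (‖cross3 (x₂ - x₁) (x₃ - x₁)‖ / 4) * K * (Metric.diam T) ^ 2 := by
  classical
  set D := ‖cross3 (x₂ - x₁) (x₃ - x₁)‖ with hD
  have hD0 : 0 ≤ D := norm_nonneg _
  set h := Metric.diam T with hh
  -- the affine parameterization
  set L : ℝ × ℝ →L[ℝ] EuclideanSpace ℝ (Fin 3) :=
    (ContinuousLinearMap.fst ℝ ℝ ℝ).smulRight (x₂ - x₁)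
      + (ContinuousLinearMap.snd ℝ ℝ ℝ).smulRight (x₃ - x₁) with hL
  have hLapp : ∀ p : ℝ × ℝ, L p = p.1 • (x₂ - x₁) + p.2 • (x₃ - x₁) := fun p => rfl
  set X : ℝ × ℝ → EuclideanSpace ℝ (Fin 3) := fun p => x₁ + L p with hXdef
  have hXeq : ∀ p : ℝ × ℝ,
      (1 - p.1 - p.2) • x₁ + p.1 • x₂ + p.2 • x₃ = X p := by
    intro p
    show _ = x₁ + L p
    rw [hLapp]
    module
  set c : ℝ × ℝ := ((1:ℝ)/3, (1:ℝ)/3) with hc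
  have hcS : c ∈ refTriangle := by
    refine ⟨by norm_num, by norm_num, by norm_num⟩
  have hXT : ∀ p ∈ refTriangle, X p ∈ T := by
    rintro p ⟨h1, h2, h3⟩
    rw [hT, ← hXeq p]
    have := (convex_convexHull ℝ ({x₁, x₂, x₃} : Set (EuclideanSpace ℝ (Fin 3)))).sum_mem
      (t := (Finset.univ : Finset (Fin 3)))
      (w := ![1 - p.1 - p.2, p.1, p.2]) (z := ![x₁, x₂, x₃])
      (fun i _ => by fin_cases i <;> simp <;> linarith)
      (by simp [Fin.sum_univ_three]; ring)
      (fun i _ => subset_convexHull ℝ _ (by fin_cases i <;> simp))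
    simpa [Fin.sum_univ_three] using this
  set xc := X c with hxc
  have hgc : ((1:ℝ)/3) • (x₁ + x₂ + x₃) = xc := by
    show _ = x₁ + L c
    rw [hLapp]
    show _ = x₁ + (((1:ℝ)/3) • (x₂ - x₁) + ((1:ℝ)/3) • (x₃ - x₁))
    module
  -- bounds on second derivative along chords
  have hTconv : Convex ℝ T := hT ▸ convex_convexHull ℝ _
  have hTbd : Bornology.IsBounded T := by
    rw [hT]
    exact (Set.Finite.isCompact_convexHull (𝕜 := ℝ) (by simp)).isBounded
  set ℓ : ℝ × ℝ →L[ℝ] ℝ := (fderiv ℝ f xc).comp L with hℓ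
  have hR : ∀ p ∈ refTriangle, |f (X p) - f xc - ℓ (p - c)| ≤ K * h ^ 2 / 2 := by
    intro p hp
    have hba : X p - xc = L (p - c) := by
      show x₁ + L p - (x₁ + L c) = L (p - c)
      rw [map_sub]; abel
    have hseg : segment ℝ xc (X p) ⊆ U :=
      fun y hy => hTU (hTconv.segment_subset (hXT c hcS) (hXT p hp) hy)
    have hC : ∀ y ∈ segment ℝ xc (X p),
        |iteratedFDeriv ℝ 2 f y ![X p - xc, X p - xc]| ≤ K * h ^ 2 := by
      intro y hy
      have hyT : y ∈ T := hTconv.segment_subset (hXT c hcS) (hXT p hp) hy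
      refine (hK2 y hyT (X p - xc)).trans ?_
      have hdist : ‖X p - xc‖ ≤ h := by
        rw [← dist_eq_norm]
        exact Metric.dist_le_diam_of_mem hTbd (hXT p hp) (hXT c hcS)
      exact mul_le_mul_of_nonneg_left
        (pow_le_pow_left₀ (norm_nonneg _) hdist 2) hK
    have := taylor_aux f U hU hf xc (X p) hseg (K * h ^ 2) hC
    rw [hba] at this
    exact this
  -- integrability
  have hSm := measurableSet_refTriangle
  have hSc := isCompact_refTriangle
  have hvol_fin : volume refTriangle < ⊤ := hSc.measure_lt_top
  have hvolr : (volume refTriangle).toReal = 1/2 := by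
    have := refTriangle_vol
    rwa [setIntegral_const, smul_eq_mul, mul_one] at this
  have hXcont : Continuous X := by
    rw [hXdef]; exact continuous_const.add L.continuous
  have hg_int : IntegrableOn (fun p => f (X p)) refTriangle volume := by
    refine ContinuousOn.integrableOn_compact hSc ?_
    exact hf.continuousOn.comp hXcont.continuousOn (fun p hp => hTU (hXT p hp))
  have hℓ_int : IntegrableOn (fun p : ℝ × ℝ => ℓ (p - c)) refTriangle volume := by
    refine ContinuousOn.integrableOn_compact hSc ?_
    exact (ℓ.continuous.comp (continuous_id.sub continuous_const)).continuousOn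
  have hconst_int : IntegrableOn (fun _ : ℝ × ℝ => f xc) refTriangle volume :=
    (integrableOn_const_iff).mpr (Or.inr hvol_fin)
  -- the linear term integrates to zero
  have hℓp : ∀ p : ℝ × ℝ, ℓ p = p.1 * ℓ (1, 0) + p.2 * ℓ (0, 1) := by
    intro p
    have hp : p = p.1 • ((1:ℝ), (0:ℝ)) + p.2 • ((0:ℝ), (1:ℝ)) := by
      ext <;> simp
    calc ℓ p = ℓ (p.1 • ((1:ℝ), (0:ℝ)) + p.2 • ((0:ℝ), (1:ℝ))) := by rw [← hp]
      _ = p.1 * ℓ (1, 0) + p.2 * ℓ (0, 1) := by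
          rw [map_add, ℓ.map_smul, ℓ.map_smul, smul_eq_mul, smul_eq_mul]
  have hint1 : IntegrableOn (fun p : ℝ × ℝ => p.1 * ℓ (1, 0)) refTriangle volume :=
    ContinuousOn.integrableOn_compact hSc (continuous_fst.mul continuous_const).continuousOn
  have hint2 : IntegrableOn (fun p : ℝ × ℝ => p.2 * ℓ (0, 1)) refTriangle volume :=
    ContinuousOn.integrableOn_compact hSc (continuous_snd.mul continuous_const).continuousOn
  have hℓ_int' : IntegrableOn (fun p : ℝ × ℝ => ℓ p) refTriangle volume :=
    ContinuousOn.integrableOn_compact hSc ℓ.continuous.continuousOn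
  have hmomL : ∫ p in refTriangle, ℓ p = ℓ (1, 0) / 6 + ℓ (0, 1) / 6 := by
    rw [show (∫ p in refTriangle, ℓ p)
        = ∫ p in refTriangle, (p.1 * ℓ (1, 0) + p.2 * ℓ (0, 1))
      from integral_congr_ae (Filter.Eventually.of_forall hℓp),
      integral_add hint1 hint2, integral_mul_const, integral_mul_const,
      refTriangle_m1, refTriangle_m2]
    ring
  have hIntL : ∫ p in refTriangle, ℓ (p - c) = 0 := by
    have heq : ∀ p : ℝ × ℝ, ℓ (p - c) = ℓ p - ℓ c := fun p => map_sub ℓ p c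
    rw [integral_congr_ae (Filter.Eventually.of_forall heq),
      integral_sub hℓ_int' ((integrableOn_const_iff).mpr (Or.inr hvol_fin)),
      hmomL, setIntegral_const, measureReal_def, hvolr, smul_eq_mul, hℓp c]
    show ℓ (1, 0) / 6 + ℓ (0, 1) / 6 - 1/2 * ((1:ℝ)/3 * ℓ (1, 0) + (1:ℝ)/3 * ℓ (0, 1)) = 0
    ring
  -- split the integral
  have hsplit : ∫ p in refTriangle, (f (X p) - f xc - ℓ (p - c))
      = (∫ p in refTriangle, f (X p)) - 1/2 * f xc := by
    have hsub1 : IntegrableOn (fun p : ℝ × ℝ => f (X p) - f xc) refTriangle volume :=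
      hg_int.sub hconst_int
    rw [integral_sub hsub1 hℓ_int, integral_sub hg_int hconst_int,
      hIntL, setIntegral_const, measureReal_def, hvolr, smul_eq_mul]
    ring
  have hbound : |∫ p in refTriangle, (f (X p) - f xc - ℓ (p - c))|
      ≤ K * h ^ 2 / 2 * (1/2) := by
    have := norm_setIntegral_le_of_norm_le_const (μ := volume) hvol_fin
      (C := K * h ^ 2 / 2) (f := fun p => f (X p) - f xc - ℓ (p - c))
      (fun p hp => by rw [Real.norm_eq_abs]; exact hR p hp)
    rw [measureReal_def, hvolr] at this
    simpa using this
  have hkey : |(∫ p in refTriangle, f (X p)) - 1/2 * f xc| ≤ K * h ^ 2 / 4 := by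
    rw [← hsplit]
    linarith [hbound]
  -- conclude
  simp_rw [hXeq]
  rw [hgc]
  have hfactor : D * (∫ p in refTriangle, f (X p)) - D / 2 * f xc
      = D * ((∫ p in refTriangle, f (X p)) - 1/2 * f xc) := by ring
  rw [hfactor, abs_mul, abs_of_nonneg hD0]
  calc D * |(∫ p in refTriangle, f (X p)) - 1/2 * f xc|
      ≤ D * (K * h ^ 2 / 4) := mul_le_mul_of_nonneg_left hkey hD0
    _ = D / 4 * K * h ^ 2 := by ring
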